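/- For a symmetric positive definite matrix X and symmetric matrix ξ, one has X · expm(X⁻¹ ξ) = X^{1/2} · expm(X^{−1/2} ξ X^{−1/2}) · X^{1/2}; in particular X · expm(X⁻¹ ξ) is symmetric positive definite. -/

import Mathlib

open Matrix NormedSpace

section

open scoped ComplexOrder

/-- The positive semidefinite square root of a positive semidefinite matrix
(the definition `Matrix.PosSemidef.sqrt` of the older Mathlib, since removed). -/
noncomputable def Matrix.PosSemidef.sqrt {n 𝕜 : Type*} [Fintype n] [DecidableEq n] [RCLike 𝕜]
    {A : Matrix n n 𝕜} (hA : A.PosSemidef) : Matrix n n 𝕜 :=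
  hA.1.eigenvectorUnitary.1 * diagonal ((↑) ∘ (√·) ∘ hA.1.eigenvalues) *
  (star hA.1.eigenvectorUnitary : Matrix n n 𝕜)

end

lemma sqrt_isHermitian_aux {n : ℕ} {X : Matrix (Fin n) (Fin n) ℝ} (hX : X.PosSemidef) :
    hX.sqrt.IsHermitian := by
  unfold Matrix.PosSemidef.sqrt
  rw [Matrix.star_eq_conjTranspose]
  exact isHermitian_mul_mul_conjTranspose _ (isHermitian_diagonal_of_self_adjoint _ (IsSelfAdjoint.all _))

lemma sqrt_mul_self_aux {n : ℕ} {X : Matrix (Fin n) (Fin n) ℝ} (hX : X.PosSemidef) :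
    hX.sqrt * hX.sqrt = X := by
  unfold Matrix.PosSemidef.sqrt
  have hU := Unitary.coe_star_mul_self hX.1.eigenvectorUnitary
  calc _ = hX.1.eigenvectorUnitary.1 *
        (diagonal ((RCLike.ofReal : ℝ → ℝ) ∘ (√·) ∘ hX.1.eigenvalues) *
          (star hX.1.eigenvectorUnitary.1 * hX.1.eigenvectorUnitary.1) *
          diagonal ((RCLike.ofReal : ℝ → ℝ) ∘ (√·) ∘ hX.1.eigenvalues)) *
        star hX.1.eigenvectorUnitary.1 := by
          simp only [Matrix.mul_assoc]
    _ = X := by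
      rw [hU, Matrix.mul_one, diagonal_mul_diagonal]
      conv_rhs => rw [hX.1.spectral_theorem, Unitary.conjStarAlgAut_apply]
      congr 3
      funext i
      simp [Real.mul_self_sqrt (hX.eigenvalues_nonneg i)]

/-- Conjugating a positive definite matrix by an invertible matrix preserves
positive definiteness. -/
lemma posDef_conj_aux {n : ℕ} {M B : Matrix (Fin n) (Fin n) ℝ}
    (hM : M.PosDef) (hB : IsUnit B) : (Bᴴ * M * B).PosDef := by
  refine Matrix.PosDef.of_dotProduct_mulVec_pos (isHermitian_conjTranspose_mul_mul B hM.1) fun x hx => ?_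
  have hBx : B *ᵥ x ≠ 0 :=
    (Matrix.mulVec_injective_iff_isUnit.mpr hB |>.ne_iff' (mulVec_zero _)).2 hx
  simpa only [star_mulVec, dotProduct_mulVec, vecMul_vecMul] using hM.dotProduct_mulVec_pos hBx

/-- The exponential of a real symmetric matrix is positive definite. -/
lemma posDef_exp_of_isHermitian {n : ℕ} {A : Matrix (Fin n) (Fin n) ℝ}
    (hA : A.IsHermitian) : (exp A).PosDef := by
  have h2 : (((1:ℝ)/2) • A).IsHermitian := by
    unfold Matrix.IsHermitian
    rw [Matrix.conjTranspose_smul, hA.eq, star_trivial]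
  have hhalf : exp (((1:ℝ)/2) • A) * exp (((1:ℝ)/2) • A) = exp A := by
    rw [← Matrix.exp_add_of_commute _ _ (Commute.refl _)]
    norm_num [← add_smul]
  have hE : (exp (((1:ℝ)/2) • A))ᴴ = exp (((1:ℝ)/2) • A) := Matrix.IsHermitian.exp h2
  have := posDef_conj_aux (Matrix.PosDef.one (n := Fin n) (R := ℝ))
    (Matrix.isUnit_exp (((1:ℝ)/2) • A))
  rwa [Matrix.mul_one, hE, hhalf] at this

/-- For `X` symmetric positive definite and `ξ` symmetric,
`X * exp(X⁻¹ * ξ) = X^{1/2} * exp(X^{-1/2} * ξ * X^{-1/2}) * X^{1/2}`; in particular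
`X * exp(X⁻¹ * ξ)` is symmetric positive definite. -/
theorem exp_sandwich_posDef {n : ℕ} (X ξ : Matrix (Fin n) (Fin n) ℝ)
    (hX : X.PosDef) (hξ : ξ.IsSymm) :
    X * exp (X⁻¹ * ξ)
      = hX.posSemidef.sqrt * exp ((hX.posSemidef.sqrt)⁻¹ * ξ * (hX.posSemidef.sqrt)⁻¹) *
          hX.posSemidef.sqrt ∧
    (X * exp (X⁻¹ * ξ)).PosDef := by
  classical
  set S := hX.posSemidef.sqrt with hSdef
  have hSH : S.IsHermitian := sqrt_isHermitian_aux hX.posSemidef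
  have hSS : S * S = X := sqrt_mul_self_aux hX.posSemidef
  have hdet : IsUnit S.det := by
    have h : S.det * S.det = X.det := by rw [← Matrix.det_mul, hSS]
    have hXd : X.det ≠ 0 := ne_of_gt hX.det_pos
    exact isUnit_iff_ne_zero.2 (fun h0 => hXd (by rw [← h, h0, mul_zero]))
  have hSu : IsUnit S := (Matrix.isUnit_iff_isUnit_det S).2 hdet
  have hcancel : S⁻¹ * S = 1 := Matrix.nonsing_inv_mul S hdet
  have hXinv : X⁻¹ = S⁻¹ * S⁻¹ := by rw [← hSS, Matrix.mul_inv_rev]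
  set A := S⁻¹ * ξ * S⁻¹ with hAdef
  have hconj : X⁻¹ * ξ = S⁻¹ * A * S := by
    rw [hXinv, hAdef]
    simp only [Matrix.mul_assoc, hcancel, Matrix.mul_one]
  have hexp : exp (X⁻¹ * ξ) = S⁻¹ * exp A * S := by
    rw [hconj]; exact Matrix.exp_conj' S A hSu
  have hmain : X * exp (X⁻¹ * ξ) = S * exp A * S := by
    rw [hexp, ← hSS]
    calc S * S * (S⁻¹ * exp A * S)
        = S * (S * S⁻¹) * exp A * S := by simp only [Matrix.mul_assoc]
      _ = S * exp A * S := by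
          rw [Matrix.mul_nonsing_inv S hdet, Matrix.mul_one]
  have hAH : A.IsHermitian := by
    have hξH : ξ.IsHermitian := by
      rwa [Matrix.IsHermitian, conjTranspose_eq_transpose_of_trivial]
    have hSiH : (S⁻¹).IsHermitian := hSH.inv
    rw [hAdef, Matrix.IsHermitian]
    rw [Matrix.conjTranspose_mul, Matrix.conjTranspose_mul, hSiH.eq, hξH.eq,
      Matrix.mul_assoc]
  have hexpPD : (exp A).PosDef := posDef_exp_of_isHermitian hAH
  have hPD : (S * exp A * S).PosDef := by
    have := posDef_conj_aux hexpPD hSu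
    rwa [hSH.eq] at this
  exact ⟨hmain, hmain ▸ hPD⟩
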